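/- Let X be a compact topological space, A ⊆ X a closed subset, and E a Banach space. Then the restriction map from C(X, E) to C(A, E) admits a continuous linear section, i.e., there is a continuous linear map s : C(A, E) → C(X, E) with (s g)|_A = g for all g ∈ C(A, E), provided X is a compact metric space. -/

import Mathlib

open Metric Set Function

section Dugundji

variable {X : Type*} [MetricSpace X] [CompactSpace X] {A : Set X}
variable {E : Type*} [NormedAddCommGroup E] [NormedSpace ℝ E]

theorem dugundji_aux (hA : IsClosed A) (hne : A.Nonempty) :
    ∃ s : C(A, E) →L[ℝ] C(X, E), ∀ g : C(A, E), ∀ a : A, s g (a : X) = g a := by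
  classical
  haveI : CompactSpace A := isCompact_iff_compactSpace.mp hA.isCompact
  -- positivity of distance to A for points outside A
  have hpos : ∀ c : ↥Aᶜ, 0 < infDist (c : X) A := fun c =>
    (hA.notMem_iff_infDist_pos hne).1 c.2
  -- the cover of Aᶜ by small balls
  set U : ↥Aᶜ → Set ↥Aᶜ := fun c =>
    Subtype.val ⁻¹' Metric.ball (c : X) (infDist (c : X) A / 3) with hU
  obtain ⟨ρ, hρ⟩ : ∃ ρ : PartitionOfUnity ↥Aᶜ ↥Aᶜ univ, ρ.IsSubordinate U :=
    PartitionOfUnity.exists_isSubordinate isClosed_univ U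
      (fun c => isOpen_ball.preimage continuous_subtype_val)
      (fun y _ => Set.mem_iUnion.2 ⟨y, by
        simp only [hU, Set.mem_preimage, mem_ball, dist_self]
        exact div_pos (hpos y) (by norm_num)⟩)
  -- nearest point projection
  choose p hpA hp using fun c : ↥Aᶜ =>
    hA.isCompact.exists_infDist_eq_dist hne (c : X)
  -- If ρ c y ≠ 0 then the projected point p c is 3·dist(y,a)-close to any a ∈ A close to y
  have hclose : ∀ (c : ↥Aᶜ) (y : ↥Aᶜ), ρ c y ≠ 0 → ∀ a ∈ A,
      dist (p c) a ≤ 3 * dist (y : X) a := by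
    intro c y hcy a ha
    have hyU : y ∈ U c := hρ c (subset_tsupport _ hcy)
    have hyc : dist (y : X) (c : X) < infDist (c : X) A / 3 := hyU
    have h1 : infDist (c : X) A ≤ dist (c : X) a := infDist_le_dist_of_mem ha
    have h2 : dist (c : X) a ≤ dist (c : X) (y : X) + dist (y : X) a := dist_triangle _ _ _
    have h3 : dist (p c) a ≤ dist (p c) (c : X) + dist (c : X) a := dist_triangle _ _ _
    have h4 : dist (p c) (c : X) = infDist (c : X) A := by rw [dist_comm]; exact (hp c).symm
    have h2' : dist (c : X) a ≤ dist ((y : X)) (c : X) + dist (y : X) a := by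
      rw [dist_comm ((y : X)) (c : X)]; exact h2
    have h5 : infDist (c : X) A ≤ (3/2) * dist (y : X) a := by linarith
    linarith
  -- the extension values on Aᶜ
  set e : C(A, E) → ↥Aᶜ → E := fun g y => ∑ᶠ c, ρ c y • g ⟨p c, hpA c⟩ with he
  have e_eq : ∀ (g : C(A, E)) (y : ↥Aᶜ),
      e g y = ∑ c ∈ ρ.finsupport y, ρ c y • g ⟨p c, hpA c⟩ := by
    intro g y
    rw [he]
    exact (ρ.sum_finsupport_smul_eq_finsum (fun c _ => g ⟨p c, hpA c⟩)).symm
  have he_cont : ∀ g : C(A, E), Continuous (e g) := fun g =>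
    ρ.continuous_finsum_smul (fun c x _ => continuousAt_const)
  -- key estimate near the boundary
  have key : ∀ (g : C(A, E)) (a : X) (ha : a ∈ A) (δ ε : ℝ), 0 ≤ ε →
      (∀ b : A, dist (b : X) a < δ → ‖g b - g ⟨a, ha⟩‖ ≤ ε) →
      ∀ y : ↥Aᶜ, dist (y : X) a < δ / 3 → ‖e g y - g ⟨a, ha⟩‖ ≤ ε := by
    intro g a ha δ ε hε hδ y hy
    have hsum : ∑ c ∈ ρ.finsupport y, ρ c y = 1 := ρ.sum_finsupport (mem_univ y)
    have : e g y - g ⟨a, ha⟩ = ∑ c ∈ ρ.finsupport y, ρ c y • (g ⟨p c, hpA c⟩ - g ⟨a, ha⟩) := by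
      rw [e_eq]
      simp only [smul_sub]
      rw [Finset.sum_sub_distrib, ← Finset.sum_smul, hsum, one_smul]
    rw [this]
    calc ‖∑ c ∈ ρ.finsupport y, ρ c y • (g ⟨p c, hpA c⟩ - g ⟨a, ha⟩)‖
        ≤ ∑ c ∈ ρ.finsupport y, ‖ρ c y • (g ⟨p c, hpA c⟩ - g ⟨a, ha⟩)‖ :=
          norm_sum_le _ _
      _ ≤ ∑ c ∈ ρ.finsupport y, ρ c y * ε := by
          apply Finset.sum_le_sum
          intro c hc
          rw [norm_smul, Real.norm_eq_abs, abs_of_nonneg (ρ.nonneg c y)]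
          apply mul_le_mul_of_nonneg_left _ (ρ.nonneg c y)
          apply hδ
          have hcy : ρ c y ≠ 0 := (ρ.mem_finsupport y).1 hc
          calc dist ((⟨p c, hpA c⟩ : A) : X) a ≤ 3 * dist (y : X) a :=
                hclose c y hcy a ha
            _ < 3 * (δ / 3) := by
                apply mul_lt_mul_of_pos_left hy; norm_num
            _ = δ := by ring
      _ = ε := by rw [← Finset.sum_mul, hsum, one_mul]
  -- global norm bound on Aᶜ
  have ebound : ∀ (g : C(A, E)) (y : ↥Aᶜ), ‖e g y‖ ≤ ‖g‖ := by
    intro g y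
    have hsum : ∑ c ∈ ρ.finsupport y, ρ c y = 1 := ρ.sum_finsupport (mem_univ y)
    rw [e_eq]
    calc ‖∑ c ∈ ρ.finsupport y, ρ c y • g ⟨p c, hpA c⟩‖
        ≤ ∑ c ∈ ρ.finsupport y, ‖ρ c y • g ⟨p c, hpA c⟩‖ := norm_sum_le _ _
      _ ≤ ∑ c ∈ ρ.finsupport y, ρ c y * ‖g‖ := by
          apply Finset.sum_le_sum
          intro c _
          rw [norm_smul, Real.norm_eq_abs, abs_of_nonneg (ρ.nonneg c y)]
          exact mul_le_mul_of_nonneg_left (g.norm_coe_le_norm _) (ρ.nonneg c y)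
      _ = ‖g‖ := by rw [← Finset.sum_mul, hsum, one_mul]
  -- the full extension
  set F : C(A, E) → X → E := fun g x =>
    if hx : x ∈ A then g ⟨x, hx⟩ else e g ⟨x, hx⟩ with hF
  have hFA : ∀ (g : C(A, E)) (x : X) (hx : x ∈ A), F g x = g ⟨x, hx⟩ := by
    intro g x hx; simp only [hF, dif_pos hx]
  have hFC : ∀ (g : C(A, E)) (x : X) (hx : x ∉ A), F g x = e g ⟨x, hx⟩ := by
    intro g x hx; simp only [hF, dif_neg hx]
  have hFcont : ∀ g : C(A, E), Continuous (F g) := by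
    intro g
    rw [continuous_iff_continuousAt]
    intro x
    by_cases hx : x ∈ A
    · rw [Metric.continuousAt_iff]
      intro ε hε
      have hg : ContinuousAt g ⟨x, hx⟩ := g.continuous.continuousAt
      rw [Metric.continuousAt_iff] at hg
      obtain ⟨δ, hδ0, hδ⟩ := hg (ε/2) (by positivity)
      refine ⟨δ/3, by positivity, fun {z} hz => ?_⟩
      have hδ' : ∀ b : A, dist (b : X) x < δ → ‖g b - g ⟨x, hx⟩‖ ≤ ε/2 := by
        intro b hb
        rw [← dist_eq_norm]
        exact le_of_lt (hδ (by rwa [Subtype.dist_eq]))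
      by_cases hz' : z ∈ A
      · rw [hFA g z hz', hFA g x hx]
        have hdz : dist ((⟨z, hz'⟩ : A)) (⟨x, hx⟩ : A) < δ := by
          rw [Subtype.dist_eq]
          dsimp only
          linarith
        exact lt_trans (hδ hdz) (by linarith)
      · rw [hFC g z hz', hFA g x hx, dist_eq_norm]
        calc ‖e g ⟨z, hz'⟩ - g ⟨x, hx⟩‖ ≤ ε/2 :=
              key g x hx δ (ε/2) (by positivity) hδ' ⟨z, hz'⟩ hz
          _ < ε := by linarith
    · have hAc : IsOpen Aᶜ := hA.isOpen_compl
      have hrestr : ContinuousOn (F g) Aᶜ := by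
        rw [continuousOn_iff_continuous_restrict]
        have : Aᶜ.domRestrict (F g) = e g := by
          funext y
          exact hFC g y.1 y.2
        rw [this]
        exact he_cont g
      exact hrestr.continuousAt (hAc.mem_nhds hx)
  -- the linear map
  refine ⟨LinearMap.mkContinuous
    { toFun := fun g => ⟨F g, hFcont g⟩
      map_add' := ?_
      map_smul' := ?_ } 1 ?_, ?_⟩
  · intro g g'
    ext x
    simp only [ContinuousMap.coe_mk, ContinuousMap.add_apply]
    by_cases hx : x ∈ A
    · rw [hFA _ _ hx, hFA _ _ hx, hFA _ _ hx]; rfl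
    · rw [hFC _ _ hx, hFC _ _ hx, hFC _ _ hx, e_eq, e_eq, e_eq, ← Finset.sum_add_distrib]
      apply Finset.sum_congr rfl
      intro c _
      simp [smul_add]
  · intro r g
    ext x
    simp only [ContinuousMap.coe_mk, ContinuousMap.smul_apply, RingHom.id_apply]
    by_cases hx : x ∈ A
    · rw [hFA _ _ hx, hFA _ _ hx]; rfl
    · rw [hFC _ _ hx, hFC _ _ hx, e_eq, e_eq, Finset.smul_sum]
      apply Finset.sum_congr rfl
      intro c _
      simp only [ContinuousMap.smul_apply]
      rw [smul_comm]
  · intro g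
    rw [one_mul]
    refine (ContinuousMap.norm_le _ (norm_nonneg g)).2 fun x => ?_
    show ‖F g x‖ ≤ ‖g‖
    by_cases hx : x ∈ A
    · rw [hFA _ _ hx]; exact g.norm_coe_le_norm _
    · rw [hFC _ _ hx]; exact ebound g _
  · intro g a
    show F g (a : X) = g a
    rw [hFA g a a.2]

end Dugundji

/-- Linear Tietze/Dugundji extension: for a compact metric space `X`, a closed
subset `A ⊆ X` and a Banach space `E`, the restriction map `C(X,E) → C(A,E)`
admits a continuous linear section. -/
theorem exists_continuous_linear_extension_operator
    {X : Type*} [MetricSpace X] [CompactSpace X] (A : Set X) (hA : IsClosed A)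
    (E : Type*) [NormedAddCommGroup E] [NormedSpace ℝ E] [CompleteSpace E] :
    ∃ s : C(A, E) →L[ℝ] C(X, E), ∀ g : C(A, E), ∀ a : A, s g (a : X) = g a := by
  rcases A.eq_empty_or_nonempty with h | hne
  · subst h
    exact ⟨0, fun g a => absurd a.2 (Set.notMem_empty _)⟩
  · exact dugundji_aux hA hne
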